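/- Let N be a symmetric numerical semigroup of multiplicity m ≥ 3 (i.e. m is the smallest nonzero element of N). Then N can be generated by at most m − 1 elements; that is, any minimal system of generators of N has at most m − 1 elements. -/

import Mathlib

/-- A symmetric numerical semigroup of multiplicity `m ≥ 3` can be generated by
at most `m − 1` elements: any minimal system of generators has at most `m − 1` elements. -/
theorem symmetric_semigroup_card_minimal_generators
    (N : Set ℕ) (h0 : (0 : ℕ) ∈ N)
    (hadd : ∀ a ∈ N, ∀ b ∈ N, a + b ∈ N)
    (hfin : (Nᶜ : Set ℕ).Finite)
    (g : ℕ) (hg : g = (Nᶜ : Set ℕ).ncard)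
    (hgap : (2 * g - 1) ∉ N)
    (hmaxgap : ∀ ℓ : ℕ, ℓ ∉ N → ℓ ≤ 2 * g - 1)
    (m : ℕ) (hmN : m ∈ N) (hm0 : m ≠ 0)
    (hmult : ∀ s ∈ N, s ≠ 0 → m ≤ s)
    (hm3 : 3 ≤ m)
    (G : Finset ℕ)
    (hGgen : N = (AddSubmonoid.closure (G : Set ℕ) : Set ℕ))
    (hGmin : ∀ x ∈ G, x ∉ AddSubmonoid.closure ((G : Set ℕ) \ {x})) :
    G.card ≤ m - 1 := by
  classical
  set F := 2 * g - 1 with hF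
  -- basic facts
  have h1N : (1 : ℕ) ∉ N := fun h => by have := hmult 1 h one_ne_zero; omega
  have hbig : ∀ n : ℕ, F < n → n ∈ N := by
    intro n hn
    by_contra hnot
    exact absurd (hmaxgap n hnot) (by omega)
  -- finset of gaps
  set GF : Finset ℕ := hfin.toFinset with hGF
  have hgcard : g = GF.card := by rw [hg, Set.ncard_eq_toFinset_card _ hfin]
  have hg1 : 1 ≤ g := by
    rw [hgcard]
    exact Finset.card_pos.mpr ⟨1, by simp [hGF, h1N]⟩
  have hmemGF : ∀ x : ℕ, x ∈ GF ↔ x ∉ N := by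
    intro x; simp [hGF]
  -- symmetry: if ℓ is a gap then F - ℓ ∈ N
  have hsym : ∀ ℓ : ℕ, ℓ ∉ N → F - ℓ ∈ N := by
    intro ℓ hℓ
    have hℓF : ℓ ≤ F := hmaxgap ℓ hℓ
    set E : Finset ℕ := (Finset.range (2 * g)).filter (· ∈ N) with hE
    have hGFeq : GF = (Finset.range (2 * g)).filter (· ∉ N) := by
      ext x
      simp only [hmemGF, Finset.mem_filter, Finset.mem_range]
      constructor
      · intro hx; exact ⟨by have := hmaxgap x hx; omega, hx⟩
      · intro hx; exact hx.2
    have hcardsum : E.card + GF.card = 2 * g := by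
      rw [hGFeq, hE]
      rw [Finset.card_filter_add_card_filter_not, Finset.card_range]
    have hEcard : E.card = g := by omega
    have hsurj := Finset.surj_on_of_inj_on_of_card_le (s := E) (t := GF)
      (f := fun n _ => F - n)
      (by
        intro a ha
        simp only [hE, Finset.mem_filter, Finset.mem_range] at ha
        rw [hmemGF]
        intro hcon
        have haF : a ≤ F := by omega
        have : a + (F - a) ∈ N := hadd a ha.2 _ hcon
        rw [Nat.add_sub_cancel' haF] at this
        exact hgap this)
      (by
        intro a₁ a₂ ha₁ ha₂ hfa
        simp only [hE, Finset.mem_filter, Finset.mem_range] at ha₁ ha₂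
        omega)
      (by omega)
    have hℓGF : ℓ ∈ GF := (hmemGF ℓ).mpr hℓ
    obtain ⟨n, hn, hn2⟩ := hsurj ℓ hℓGF
    simp only [hE, Finset.mem_filter, Finset.mem_range] at hn
    have : F - ℓ = n := by omega
    rw [this]
    exact hn.2
  -- multiples of m are in N
  have hmul : ∀ k : ℕ, m * k ∈ N := by
    intro k
    induction k with
    | zero => simpa using h0
    | succ k ih => rw [Nat.mul_succ]; exact hadd _ ih _ hmN
  have hF0 : F ≠ 0 := fun h => hgap (h ▸ h0)
  have hFm : F % m ≠ 0 := by
    intro h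
    have : m * (F / m) ∈ N := hmul _
    rw [Nat.mul_div_cancel' (Nat.dvd_of_mod_eq_zero h)] at this
    exact hgap this
  -- elements of closure G below x are in closure (G \ {x})
  have hltc : ∀ x : ℕ, ∀ a : ℕ, a ∈ AddSubmonoid.closure (G : Set ℕ) → a < x →
      a ∈ AddSubmonoid.closure ((G : Set ℕ) \ {x}) := by
    intro x a ha'
    induction ha' using AddSubmonoid.closure_induction with
    | mem y hy =>
      intro hlt
      exact AddSubmonoid.subset_closure ⟨hy, by simp; omega⟩
    | zero => intro _; exact zero_mem _
    | add p q hp hq ihp ihq =>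
      intro hpq
      have hp' : p < x := by omega
      have hq' : q < x := by omega
      exact add_mem (ihp hp') (ihq hq')
  have hlt : ∀ x : ℕ, ∀ a ∈ N, a < x → a ∈ AddSubmonoid.closure ((G : Set ℕ) \ {x}) :=
    fun x a ha => hltc x a (by rw [hGgen] at ha; exact ha)
  -- generators are in N
  have hGsub : ∀ x ∈ G, x ∈ N := by
    intro x hx
    rw [hGgen]
    exact AddSubmonoid.subset_closure hx
  have hGne0 : ∀ x ∈ G, x ≠ 0 := by
    intro x hx hx0
    exact hGmin x hx (hx0 ▸ zero_mem _)
  -- generators are indecomposable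
  have hindec : ∀ x ∈ G, ∀ a ∈ N, ∀ b ∈ N, a ≠ 0 → b ≠ 0 → x ≠ a + b := by
    intro x hx a ha b hb ha0 hb0 hxe
    have hax : a < x := by omega
    have hbx : b < x := by omega
    have hmem : a + b ∈ AddSubmonoid.closure ((G : Set ℕ) \ {x}) :=
      add_mem (hlt x a ha hax) (hlt x b hb hbx)
    rw [← hxe] at hmem
    exact hGmin x hx hmem
  -- no generator is ≡ F mod m
  have hnotF : ∀ x ∈ G, x % m ≠ F % m := by
    intro x hx hxe
    have hxN := hGsub x hx
    have hxF : x ≠ F := fun h => hgap (h ▸ hxN)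
    rcases lt_or_gt_of_ne hxF with hlt' | hgt
    · -- x < F: then F = x + k*m ∈ N, contradiction
      have hdvd : m ∣ F - x := by
        have := (Nat.modEq_iff_dvd' (le_of_lt hlt')).mp hxe
        exact this
      obtain ⟨k, hk⟩ := hdvd
      have : x + m * k ∈ N := hadd x hxN _ (hmul k)
      have hFe : F = x + m * k := by omega
      exact hgap (hFe ▸ this)
    · -- x > F
      have hdvd : m ∣ x - F := by
        exact (Nat.modEq_iff_dvd' (le_of_lt hgt)).mp hxe.symm
      obtain ⟨k, hk⟩ := hdvd
      have hk1 : 1 ≤ k := by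
        rcases Nat.eq_zero_or_pos k with h | h
        · subst h; rw [mul_zero] at hk; omega
        · exact h
      rcases Nat.lt_or_ge k 2 with hk2 | hk2
      · -- k = 1 : x = F + m, show F + m is decomposable
        have hke : k = 1 := by omega
        rw [hke, mul_one] at hk
        have hxFm : x = F + m := by omega
        -- choose residue r ∉ {0, F % m}
        set r : ℕ := if F % m = 1 then 2 else 1 with hr
        have hrm : r < m := by rw [hr]; split_ifs <;> omega
        have hr0 : r ≠ 0 := by rw [hr]; split_ifs <;> omega
        have hrF : r ≠ F % m := by rw [hr]; split_ifs with hc <;> omega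
        -- least element of N with residue r
        have hex : ∃ n : ℕ, n ∈ N ∧ n % m = r := by
          refine ⟨r + m * (F + 1), hbig _ (by nlinarith), ?_⟩
          simp [Nat.add_mul_mod_self_left, Nat.mod_eq_of_lt hrm]
        set w := Nat.find hex with hw
        obtain ⟨hwN, hwr⟩ := Nat.find_spec hex
        rw [← hw] at hwN hwr
        have hw0 : w ≠ 0 := by
          intro h; rw [h] at hwr; simp at hwr; exact hr0 hwr.symm
        have hwm : m ≤ w := hmult w hwN hw0
        have hwgt : m < w := by
          rcases Nat.eq_or_lt_of_le hwm with h | h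
          · exfalso; rw [← h] at hwr; simp at hwr; exact hr0 hwr.symm
          · exact h
        -- w - m has residue r and is smaller than w, hence not in N
        obtain ⟨q, hqe⟩ : ∃ q, w = m * q + r :=
          ⟨w / m, by rw [← hwr]; exact (Nat.div_add_mod w m).symm⟩
        have hq1 : 1 ≤ q := by
          rcases Nat.eq_zero_or_pos q with h | h
          · subst h; rw [mul_zero] at hqe; omega
          · exact h
        have hms : m * (q - 1) + m = m * q := by
          rw [← Nat.mul_succ]; congr 1; omega
        have hwmr : (w - m) % m = r := by
          have : w - m = r + m * (q - 1) := by omega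
          rw [this]
          simp [Nat.add_mul_mod_self_left, Nat.mod_eq_of_lt hrm]
        have hwle : ∀ n, n < w → ¬(n ∈ N ∧ n % m = r) := fun n hn =>
          Nat.find_min hex (hw ▸ hn)
        have hwmN : w - m ∉ N := by
          intro hcon
          exact hwle (w - m) (by omega) ⟨hcon, hwmr⟩
        have hwmF : w - m ≤ F := hmaxgap _ hwmN
        have hb : F - (w - m) ∈ N := hsym _ hwmN
        have hbne : F - (w - m) ≠ 0 := by
          intro h
          have he : w - m = F := by omega
          rw [he] at hwmr
          exact hrF hwmr.symm
        have hsum : x = w + (F - (w - m)) := by omega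
        exact hindec x hx w hwN _ hb hw0 hbne hsum
      · -- k ≥ 2 : x - m ∈ N, x = (x - m) + m decomposable
        have h2m : m * 2 ≤ m * k := Nat.mul_le_mul_left m hk2
        have hxm : x - m ∈ N := by
          apply hbig
          omega
        have hxm0 : x - m ≠ 0 := by omega
        have : x = (x - m) + m := by omega
        exact hindec x hx _ hxm m hmN hxm0 hm0 this
  -- residues are injective on G
  have hinj : Set.InjOn (· % m) G := by
    intro x hx y hy hxy
    by_contra hne
    rcases lt_or_gt_of_ne hne with h | h
    · obtain ⟨k, hk⟩ := (Nat.modEq_iff_dvd' (le_of_lt h)).mp hxy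
      have hk1 : k ≠ 0 := by rintro rfl; rw [mul_zero] at hk; omega
      have : y = x + m * k := by omega
      exact hindec y hy x (hGsub x hx) _ (hmul k) (hGne0 x hx)
        (Nat.mul_ne_zero hm0 hk1) this
    · obtain ⟨k, hk⟩ := (Nat.modEq_iff_dvd' (le_of_lt h)).mp hxy.symm
      have hk1 : k ≠ 0 := by rintro rfl; rw [mul_zero] at hk; omega
      have : x = y + m * k := by omega
      exact hindec x hx y (hGsub y hy) _ (hmul k) (hGne0 y hy)
        (Nat.mul_ne_zero hm0 hk1) this
  -- conclude
  have hcard : G.card ≤ ((Finset.range m).erase (F % m)).card := by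
    apply Finset.card_le_card_of_injOn (· % m)
    · intro x hx
      rw [Finset.mem_coe, Finset.mem_erase, Finset.mem_range]
      exact ⟨hnotF x hx, Nat.mod_lt x (by omega)⟩
    · exact fun x hx y hy h => hinj hx hy h
  rw [Finset.card_erase_of_mem (by rw [Finset.mem_range]; exact Nat.mod_lt F (by omega)),
    Finset.card_range] at hcard
  exact hcard
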